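/- arXiv:1909.03339 — 2 statements merged into one kernel-verified Lean document; each statement's English description precedes it below -/
import Mathlib

section
/- Let G=(V,E) be a finite loopless undirected graph, ≺ a linear order on V, and ℓ ≥ 2. Every feedback arc set of G'(ℓ) of minimum cardinality consists only of vertex arcs, i.e., it contains no edge arc. -/
/-- A digraph on vertex type `W` is given by its arc set `A ⊆ W × W`.
It is acyclic when the transitive closure of its arc relation is irreflexive
(equivalently, it has no cycle). -/
def Acyclic {W : Type*} (A : Set (W × W)) : Prop :=
  ∀ v : W, ¬ Relation.TransGen (fun u w => (u, w) ∈ A) v v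

/-- `F` is a feedback arc set of the digraph with arc set `A`:
`F ⊆ A` and the digraph `(V, A \ F)` is acyclic. -/
def IsFAS {W : Type*} (A F : Set (W × W)) : Prop :=
  F ⊆ A ∧ Acyclic (A \ F)

/-- `C` is a vertex cover of the undirected graph `G`: it meets every edge. -/
def IsVC {V : Type*} (G : SimpleGraph V) (C : Set V) : Prop :=
  ∀ u v : V, G.Adj u v → u ∈ C ∨ v ∈ C

/-- The vertices of the digraph `G'(ℓ)`: two copies `v_0, v_1` of each vertex
`v ∈ V`, and vertices `e_{i,j}` for each edge `e`, `i ∈ {0,1}`, `j ∈ [ℓ]`. -/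
abbrev GPVertex (V : Type*) (ℓ : ℕ) := (V × Fin 2) ⊕ (Sym2 V × Fin 2 × Fin ℓ)

/-- The vertex arcs `(v_0, v_1)` of `G'(ℓ)`. -/
def vertexArcs (V : Type*) (ℓ : ℕ) : Set (GPVertex V ℓ × GPVertex V ℓ) :=
  { p | ∃ v : V, p = (Sum.inl (v, 0), Sum.inl (v, 1)) }

/-- The edge arcs of `G'(ℓ)`: for each edge `{u,v}` of `G` with `u ≺ v` and each
`j ∈ [ℓ]`, the four arcs `(u_1, e_{0,j})`, `(e_{0,j}, v_0)`, `(v_1, e_{1,j})`,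
`(e_{1,j}, u_0)`. -/
def edgeArcs {V : Type*} [LinearOrder V] (G : SimpleGraph V) (ℓ : ℕ) :
    Set (GPVertex V ℓ × GPVertex V ℓ) :=
  { p | ∃ u v : V, G.Adj u v ∧ u < v ∧ ∃ j : Fin ℓ,
      p = (Sum.inl (u, 1), Sum.inr (s(u, v), 0, j)) ∨
      p = (Sum.inr (s(u, v), 0, j), Sum.inl (v, 0)) ∨
      p = (Sum.inl (v, 1), Sum.inr (s(u, v), 1, j)) ∨
      p = (Sum.inr (s(u, v), 1, j), Sum.inl (u, 0)) }

/-- The arc set of the digraph `G'(ℓ)`. -/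
def GPArcs {V : Type*} [LinearOrder V] (G : SimpleGraph V) (ℓ : ℕ) :
    Set (GPVertex V ℓ × GPVertex V ℓ) :=
  vertexArcs V ℓ ∪ edgeArcs G ℓ


section Del
variable {W : Type*} {r : W → W → Prop} {X : W → Prop}

lemma rtg_del_out (hX : ∀ x, X x → ∀ z, ¬ r x z) {p q : W}
    (h : Relation.ReflTransGen r p q) (hq : ¬ X q) :
    Relation.ReflTransGen (fun a b => r a b ∧ ¬ X b) p q := by
  induction h using Relation.ReflTransGen.head_induction_on with
  | refl => exact .refl
  | head hab hbq ih =>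
    rename_i a c
    have hc : ¬ X c := by
      intro hc
      rcases hbq.cases_head with rfl | ⟨d, hcd, _⟩
      · exact hq hc
      · exact hX _ hc _ hcd
    exact .head ⟨hab, hc⟩ ih

lemma tg_del_out (hX : ∀ x, X x → ∀ z, ¬ r x z) {v : W}
    (h : Relation.TransGen r v v) :
    Relation.TransGen (fun a b => r a b ∧ ¬ X b) v v := by
  obtain ⟨c, hvc, hcv⟩ := Relation.TransGen.head'_iff.mp h
  have hv : ¬ X v := fun hv => hX _ hv _ hvc
  have hc : ¬ X c := by
    intro hc
    rcases hcv.cases_head with rfl | ⟨d, hcd, _⟩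
    · exact hv hc
    · exact hX _ hc _ hcd
  exact Relation.TransGen.head'_iff.mpr ⟨c, ⟨hvc, hc⟩, rtg_del_out hX hcv hv⟩

lemma rtg_del_in (hX : ∀ x, X x → ∀ z, ¬ r z x) {p q : W}
    (h : Relation.ReflTransGen r p q) (hp : ¬ X p) :
    Relation.ReflTransGen (fun a b => r a b ∧ ¬ X a) p q := by
  induction h with
  | refl => exact .refl
  | tail hpc hcq ih =>
    rename_i c q
    have hc : ¬ X c := by
      intro hc
      rcases hpc.cases_tail with rfl | ⟨d, _, hdc⟩
      · exact hp hc
      · exact hX _ hc _ hdc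
    exact ih.tail ⟨hcq, hc⟩

lemma tg_del_in (hX : ∀ x, X x → ∀ z, ¬ r z x) {v : W}
    (h : Relation.TransGen r v v) :
    Relation.TransGen (fun a b => r a b ∧ ¬ X a) v v := by
  obtain ⟨c, hvc, hcv⟩ := Relation.TransGen.tail'_iff.mp h
  have hv : ¬ X v := fun hv => hX _ hv _ hcv
  have hc : ¬ X c := by
    intro hc
    rcases hvc.cases_tail with rfl | ⟨d, _, hdc⟩
    · exact hv hc
    · exact hX _ hc _ hdc
  exact Relation.TransGen.tail'_iff.mpr ⟨c, rtg_del_in hX hvc hv, ⟨hcv, hc⟩⟩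

end Del

section Struct
variable {V : Type*} [LinearOrder V] {G : SimpleGraph V} {ℓ : ℕ}

lemma sym2_eq_of_lt {u v u' v' : V} (h : s(u, v) = s(u', v')) (h1 : u < v) (h2 : u' < v') :
    u = u' ∧ v = v' := by
  rw [Sym2.eq_iff] at h
  rcases h with ⟨rfl, rfl⟩ | ⟨h3, h4⟩
  · exact ⟨rfl, rfl⟩
  · subst h3; subst h4
    exact absurd (h1.trans h2) (lt_irrefl _)

lemma out_v0 {w : V} {q : GPVertex V ℓ} (h : (Sum.inl (w, 0), q) ∈ GPArcs G ℓ) :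
    q = Sum.inl (w, 1) := by
  rcases h with ⟨w', hw⟩ | ⟨u', v', _, _, j, hsh⟩
  · rw [Prod.mk.injEq, Sum.inl.injEq, Prod.mk.injEq] at hw
    obtain ⟨⟨rfl, -⟩, h2⟩ := hw
    exact h2
  · rcases hsh with h | h | h | h <;>
      simp [Prod.ext_iff, Fin.ext_iff] at h

lemma in_v1 {w : V} {p : GPVertex V ℓ} (h : (p, Sum.inl (w, 1)) ∈ GPArcs G ℓ) :
    p = Sum.inl (w, 0) := by
  rcases h with ⟨w', hw⟩ | ⟨u', v', _, _, j, hsh⟩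
  · rw [Prod.mk.injEq, Sum.inl.injEq, Prod.mk.injEq] at hw
    obtain ⟨h1, ⟨rfl, -⟩⟩ := hw
    exact h1
  · rcases hsh with h | h | h | h <;>
      simp [Prod.ext_iff, Fin.ext_iff] at h

lemma out_e0 {u v : V} (hlt : u < v) {j : Fin ℓ} {q : GPVertex V ℓ}
    (h : (Sum.inr (s(u, v), 0, j), q) ∈ GPArcs G ℓ) : q = Sum.inl (v, 0) := by
  rcases h with ⟨w', hw⟩ | ⟨u', v', _, hlt', j', hsh⟩
  · simp [Prod.ext_iff] at hw
  · rcases hsh with h | h | h | h <;>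
      simp only [Prod.mk.injEq, Sum.inr.injEq, Sum.inl.injEq] at h
    · exact absurd h.1 (by simp)
    · obtain ⟨⟨hs, -, -⟩, h2⟩ := h
      obtain ⟨-, rfl⟩ := sym2_eq_of_lt hs hlt hlt'
      exact h2
    · exact absurd h.1 (by simp)
    · obtain ⟨⟨-, h0, -⟩, -⟩ := h
      exact absurd h0 (by decide)

lemma in_e0 {u v : V} (hlt : u < v) {j : Fin ℓ} {p : GPVertex V ℓ}
    (h : (p, Sum.inr (s(u, v), 0, j)) ∈ GPArcs G ℓ) : p = Sum.inl (u, 1) := by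
  rcases h with ⟨w', hw⟩ | ⟨u', v', _, hlt', j', hsh⟩
  · simp [Prod.ext_iff] at hw
  · rcases hsh with h | h | h | h <;>
      simp only [Prod.mk.injEq, Sum.inr.injEq, Sum.inl.injEq] at h
    · obtain ⟨h1, hs, -, -⟩ := h
      obtain ⟨rfl, -⟩ := sym2_eq_of_lt hs hlt hlt'
      exact h1
    · exact absurd h.2 (by simp)
    · obtain ⟨-, -, h0, -⟩ := h
      exact absurd h0 (by decide)
    · exact absurd h.2 (by simp)

lemma out_e1 {u v : V} (hlt : u < v) {j : Fin ℓ} {q : GPVertex V ℓ}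
    (h : (Sum.inr (s(u, v), 1, j), q) ∈ GPArcs G ℓ) : q = Sum.inl (u, 0) := by
  rcases h with ⟨w', hw⟩ | ⟨u', v', _, hlt', j', hsh⟩
  · simp [Prod.ext_iff] at hw
  · rcases hsh with h | h | h | h <;>
      simp only [Prod.mk.injEq, Sum.inr.injEq, Sum.inl.injEq] at h
    · exact absurd h.1 (by simp)
    · obtain ⟨⟨-, h0, -⟩, -⟩ := h
      exact absurd h0 (by decide)
    · exact absurd h.1 (by simp)
    · obtain ⟨⟨hs, -, -⟩, h2⟩ := h
      obtain ⟨rfl, -⟩ := sym2_eq_of_lt hs hlt hlt'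
      exact h2

lemma in_e1 {u v : V} (hlt : u < v) {j : Fin ℓ} {p : GPVertex V ℓ}
    (h : (p, Sum.inr (s(u, v), 1, j)) ∈ GPArcs G ℓ) : p = Sum.inl (v, 1) := by
  rcases h with ⟨w', hw⟩ | ⟨u', v', _, hlt', j', hsh⟩
  · simp [Prod.ext_iff] at hw
  · rcases hsh with h | h | h | h <;>
      simp only [Prod.mk.injEq, Sum.inr.injEq, Sum.inl.injEq] at h
    · obtain ⟨-, -, h0, -⟩ := h
      exact absurd h0 (by decide)
    · exact absurd h.2 (by simp)
    · obtain ⟨h1, hs, -, -⟩ := h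
      obtain ⟨-, rfl⟩ := sym2_eq_of_lt hs hlt hlt'
      exact h1
    · exact absurd h.2 (by simp)

end Struct
section Kill
variable {V : Type*} [LinearOrder V] {G : SimpleGraph V} {ℓ : ℕ}

lemma kill_low {u v : V} (hlt : u < v)
    (r : GPVertex V ℓ → GPVertex V ℓ → Prop)
    (hr : ∀ p q, r p q → (p, q) ∈ GPArcs G ℓ)
    (hw : ¬ r (Sum.inl (u, 0)) (Sum.inl (u, 1)))
    {x : GPVertex V ℓ} (hx : Relation.TransGen r x x) :
    Relation.TransGen (fun p q => r p q ∧ q ≠ Sum.inl (u, 0) ∧ p ≠ Sum.inl (u, 1) ∧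
      (∀ j : Fin ℓ, q ≠ Sum.inr (s(u, v), 1, j)) ∧
      (∀ j : Fin ℓ, p ≠ Sum.inr (s(u, v), 0, j))) x x := by
  have h1 := tg_del_out (X := fun z => z = Sum.inl (u, 0)) (r := r)
    (fun y hy z hz => by subst hy; rw [out_v0 (hr _ _ hz)] at hz; exact hw hz) hx
  have h2 := tg_del_out (X := fun z => ∃ j : Fin ℓ, z = Sum.inr (s(u, v), 1, j))
    (fun y hy z hz => by
      obtain ⟨j, rfl⟩ := hy
      exact hz.2 (out_e1 hlt (hr _ _ hz.1))) h1
  have h3 := tg_del_in (X := fun z => z = Sum.inl (u, 1))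
    (fun y hy z hz => by
      subst hy
      rw [in_v1 (hr _ _ hz.1.1)] at hz
      exact hw hz.1.1) h2
  have h4 := tg_del_in (X := fun z => ∃ j : Fin ℓ, z = Sum.inr (s(u, v), 0, j))
    (fun y hy z hz => by
      obtain ⟨j, rfl⟩ := hy
      exact hz.2 (in_e0 hlt (hr _ _ hz.1.1.1))) h3
  exact Relation.TransGen.mono (fun p q h =>
    ⟨h.1.1.1.1, h.1.1.1.2, h.1.2, fun j hj => h.1.1.2 ⟨j, hj⟩,
      fun j hj => h.2 ⟨j, hj⟩⟩) _ _ h4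

lemma kill_high {u v : V} (hlt : u < v)
    (r : GPVertex V ℓ → GPVertex V ℓ → Prop)
    (hr : ∀ p q, r p q → (p, q) ∈ GPArcs G ℓ)
    (hw : ¬ r (Sum.inl (v, 0)) (Sum.inl (v, 1)))
    {x : GPVertex V ℓ} (hx : Relation.TransGen r x x) :
    Relation.TransGen (fun p q => r p q ∧ q ≠ Sum.inl (v, 0) ∧ p ≠ Sum.inl (v, 1) ∧
      (∀ j : Fin ℓ, q ≠ Sum.inr (s(u, v), 0, j)) ∧
      (∀ j : Fin ℓ, p ≠ Sum.inr (s(u, v), 1, j))) x x := by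
  have h1 := tg_del_out (X := fun z => z = Sum.inl (v, 0)) (r := r)
    (fun y hy z hz => by subst hy; rw [out_v0 (hr _ _ hz)] at hz; exact hw hz) hx
  have h2 := tg_del_out (X := fun z => ∃ j : Fin ℓ, z = Sum.inr (s(u, v), 0, j))
    (fun y hy z hz => by
      obtain ⟨j, rfl⟩ := hy
      exact hz.2 (out_e0 hlt (hr _ _ hz.1))) h1
  have h3 := tg_del_in (X := fun z => z = Sum.inl (v, 1))
    (fun y hy z hz => by
      subst hy
      rw [in_v1 (hr _ _ hz.1.1)] at hz
      exact hw hz.1.1) h2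
  have h4 := tg_del_in (X := fun z => ∃ j : Fin ℓ, z = Sum.inr (s(u, v), 1, j))
    (fun y hy z hz => by
      obtain ⟨j, rfl⟩ := hy
      exact hz.2 (in_e1 hlt (hr _ _ hz.1.1.1))) h3
  exact Relation.TransGen.mono (fun p q h =>
    ⟨h.1.1.1.1, h.1.1.1.2, h.1.2, fun j hj => h.1.1.2 ⟨j, hj⟩,
      fun j hj => h.2 ⟨j, hj⟩⟩) _ _ h4

end Kill

section Main
variable {V : Type*} [LinearOrder V] {G : SimpleGraph V} {ℓ : ℕ}

/-- All edge arcs associated to the edge `{u,v}` (with `u < v`). -/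
def EArcs (u v : V) (ℓ : ℕ) : Set (GPVertex V ℓ × GPVertex V ℓ) :=
  {c | ∃ j : Fin ℓ,
      c = (Sum.inl (u, 1), Sum.inr (s(u, v), 0, j)) ∨
      c = (Sum.inr (s(u, v), 0, j), Sum.inl (v, 0)) ∨
      c = (Sum.inl (v, 1), Sum.inr (s(u, v), 1, j)) ∨
      c = (Sum.inr (s(u, v), 1, j), Sum.inl (u, 0))}

lemma replace_acyclic {u v : V} (hlt : u < v)
    (F F₁ : Set (GPVertex V ℓ × GPVertex V ℓ))
    (hAc : Acyclic (GPArcs G ℓ \ F))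
    (hvert : (Sum.inl (u, 0), Sum.inl (u, 1)) ∈ F₁ ∨
      (Sum.inl (v, 0), Sum.inl (v, 1)) ∈ F₁)
    (hdiff : F \ F₁ ⊆ EArcs u v ℓ) :
    Acyclic (GPArcs G ℓ \ F₁) := by
  intro x hx
  set r : GPVertex V ℓ → GPVertex V ℓ → Prop :=
    fun p q => (p, q) ∈ GPArcs G ℓ \ F₁ with hrdef
  have hrA : ∀ p q, r p q → (p, q) ∈ GPArcs G ℓ := fun p q h => h.1
  rcases hvert with hv' | hv'
  · have hw : ¬ r (Sum.inl (u, 0)) (Sum.inl (u, 1)) := fun h => h.2 hv'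
    have h4 := kill_low (G := G) hlt r hrA hw hx
    refine hAc x (Relation.TransGen.mono (fun p q h => ⟨h.1.1, fun hpF => ?_⟩) _ _ h4)
    obtain ⟨j, hc | hc | hc | hc⟩ := hdiff ⟨hpF, h.1.2⟩
    · exact h.2.2.1 (Prod.ext_iff.mp hc).1
    · exact h.2.2.2.2 j (Prod.ext_iff.mp hc).1
    · exact h.2.2.2.1 j (Prod.ext_iff.mp hc).2
    · exact h.2.1 (Prod.ext_iff.mp hc).2
  · have hw : ¬ r (Sum.inl (v, 0)) (Sum.inl (v, 1)) := fun h => h.2 hv'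
    have h4 := kill_high (G := G) hlt r hrA hw hx
    refine hAc x (Relation.TransGen.mono (fun p q h => ⟨h.1.1, fun hpF => ?_⟩) _ _ h4)
    obtain ⟨j, hc | hc | hc | hc⟩ := hdiff ⟨hpF, h.1.2⟩
    · exact h.2.2.2.1 j (Prod.ext_iff.mp hc).2
    · exact h.2.1 (Prod.ext_iff.mp hc).2
    · exact h.2.2.1 (Prod.ext_iff.mp hc).1
    · exact h.2.2.2.2 j (Prod.ext_iff.mp hc).1

end Main

/-- for `ℓ ≥ 2`, every minimum feedback arc set of `G'(ℓ)`
contains no edge arc (it consists only of vertex arcs). -/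
theorem minimum_fas_has_no_edge_arc {V : Type*} [Fintype V] [LinearOrder V]
    (G : SimpleGraph V) (ℓ : ℕ) (hℓ : 2 ≤ ℓ)
    (F : Set (GPVertex V ℓ × GPVertex V ℓ)) (hF : IsFAS (GPArcs G ℓ) F)
    (hmin : ∀ F' : Set (GPVertex V ℓ × GPVertex V ℓ),
      IsFAS (GPArcs G ℓ) F' → F.ncard ≤ F'.ncard) :
    ∀ a ∈ F, a ∉ edgeArcs G ℓ := by
  intro a ha hae
  obtain ⟨u, v, hadj, hlt, j, hshape⟩ := hae
  have haE : a ∈ EArcs u v ℓ := ⟨j, hshape⟩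
  -- a is not a vertex arc of u or v
  have hne_u : (Sum.inl (u, 0), Sum.inl (u, 1)) ≠ a := by
    rcases hshape with rfl | rfl | rfl | rfl <;> simp
  have hne_v : (Sum.inl (v, 0), Sum.inl (v, 1)) ≠ a := by
    rcases hshape with rfl | rfl | rfl | rfl <;> simp
  -- the vertex arcs of u, v are not in F
  have hvarc : ∀ w₀ : GPVertex V ℓ × GPVertex V ℓ,
      w₀ ≠ a →
      ((Sum.inl (u, 0), Sum.inl (u, 1)) = w₀ ∨ (Sum.inl (v, 0), Sum.inl (v, 1)) = w₀) →
      w₀ ∉ F := by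
    intro w₀ hwa hw₀ hwF
    have hdiff : F \ (F \ {a}) ⊆ EArcs u v ℓ := by
      intro c hc
      have : c = a := by
        by_contra hne
        exact hc.2 ⟨hc.1, hne⟩
      subst this
      exact haE
    have hfas : IsFAS (GPArcs G ℓ) (F \ {a}) :=
      ⟨fun c hc => hF.1 hc.1,
        replace_acyclic hlt F (F \ {a}) hF.2
          (by rcases hw₀ with h | h
              · exact Or.inl (h ▸ ⟨hwF, hwa⟩)
              · exact Or.inr (h ▸ ⟨hwF, hwa⟩)) hdiff⟩
    have hlt' : (F \ {a}).ncard < F.ncard :=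
      Set.ncard_diff_singleton_lt_of_mem ha F.toFinite
    exact absurd (hmin _ hfas) (by omega)
  have hu01 : (Sum.inl (u, 0), Sum.inl (u, 1)) ∉ F :=
    hvarc _ hne_u (Or.inl rfl)
  have hv01 : (Sum.inl (v, 0), Sum.inl (v, 1)) ∉ F :=
    hvarc _ hne_v (Or.inr rfl)
  -- pick a second parallel index
  haveI : Nontrivial (Fin ℓ) := Fin.nontrivial_iff_two_le.mpr hℓ
  obtain ⟨j', hj'⟩ := exists_ne j
  -- the 6-cycle through the j'-copies must be broken by an edge arc of F
  have hb : ((Sum.inl (u, 1), Sum.inr (s(u, v), 0, j')) ∈ F) ∨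
      ((Sum.inr (s(u, v), 0, j'), Sum.inl (v, 0)) ∈ F) ∨
      ((Sum.inl (v, 1), Sum.inr (s(u, v), 1, j')) ∈ F) ∨
      ((Sum.inr (s(u, v), 1, j'), Sum.inl (u, 0)) ∈ F) := by
    by_contra hcon
    push_neg at hcon
    obtain ⟨h1, h2, h3, h4⟩ := hcon
    exact hF.2 (Sum.inl (u, 0))
      (Relation.TransGen.head ⟨Or.inl ⟨u, rfl⟩, hu01⟩
        (Relation.TransGen.head ⟨Or.inr ⟨u, v, hadj, hlt, j', Or.inl rfl⟩, h1⟩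
          (Relation.TransGen.head ⟨Or.inr ⟨u, v, hadj, hlt, j', Or.inr (Or.inl rfl)⟩, h2⟩
            (Relation.TransGen.head ⟨Or.inl ⟨v, rfl⟩, hv01⟩
              (Relation.TransGen.head
                  ⟨Or.inr ⟨u, v, hadj, hlt, j', Or.inr (Or.inr (Or.inl rfl))⟩, h3⟩
                (Relation.TransGen.single
                  ⟨Or.inr ⟨u, v, hadj, hlt, j', Or.inr (Or.inr (Or.inr rfl))⟩, h4⟩))))))
  have hbex : ∃ b, b ∈ F ∧ b ∈ EArcs u v ℓ ∧ b ≠ a := by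
    rcases hb with h | h | h | h
    · exact ⟨_, h, ⟨j', Or.inl rfl⟩,
        by rcases hshape with rfl | rfl | rfl | rfl <;>
          simp [Prod.ext_iff, hj', Fin.ext_iff]⟩
    · exact ⟨_, h, ⟨j', Or.inr (Or.inl rfl)⟩,
        by rcases hshape with rfl | rfl | rfl | rfl <;>
          simp [Prod.ext_iff, hj', Fin.ext_iff]⟩
    · exact ⟨_, h, ⟨j', Or.inr (Or.inr (Or.inl rfl))⟩,
        by rcases hshape with rfl | rfl | rfl | rfl <;>
          simp [Prod.ext_iff, hj', Fin.ext_iff]⟩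
    · exact ⟨_, h, ⟨j', Or.inr (Or.inr (Or.inr rfl))⟩,
        by rcases hshape with rfl | rfl | rfl | rfl <;>
          simp [Prod.ext_iff, hj', Fin.ext_iff]⟩
  obtain ⟨b, hbF, hbE, hba⟩ := hbex
  -- the replacement FAS
  set F' := insert (Sum.inl (u, 0), Sum.inl (u, 1)) (F \ {a, b}) with hF'def
  have hfas' : IsFAS (GPArcs G ℓ) F' := by
    constructor
    · intro c hc
      rcases hc with rfl | hc
      · exact Or.inl ⟨u, rfl⟩
      · exact hF.1 hc.1
    · refine replace_acyclic hlt F F' hF.2 (Or.inl (Set.mem_insert _ _)) ?_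
      intro c hc
      have hcab : c = a ∨ c = b := by
        by_contra hcc
        push_neg at hcc
        exact hc.2 (Set.mem_insert_iff.mpr (Or.inr ⟨hc.1, by
          simp only [Set.mem_insert_iff, Set.mem_singleton_iff]
          tauto⟩))
      rcases hcab with rfl | rfl
      · exact haE
      · exact hbE
  -- cardinality contradiction
  have hab : a ≠ b := hba.symm
  have hpairsub : ({a, b} : Set _) ⊆ F := by
    intro c hc
    rcases hc with rfl | hc
    · exact ha
    · rw [Set.mem_singleton_iff] at hc
      subst hc
      exact hbF
  have hpair : ({a, b} : Set (GPVertex V ℓ × GPVertex V ℓ)).ncard = 2 :=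
    Set.ncard_pair hab
  have hdiffcard : (F \ {a, b}).ncard = F.ncard - 2 := by
    rw [Set.ncard_diff hpairsub (Set.toFinite _), hpair]
  have h2F : 2 ≤ F.ncard := by
    have := Set.ncard_le_ncard hpairsub F.toFinite
    omega
  have hle : F'.ncard ≤ (F \ {a, b}).ncard + 1 := Set.ncard_insert_le _ _
  have := hmin F' hfas'
  omega
end

section
/- Let G=(V,A) be a loopless digraph, ℓ ≥ 1, and let F be a feedback arc set of G. Then the number of feedback arc sets F' of the subdivision digraph H'(ℓ) satisfying {a ∈ A : F' ∩ P_a ≠ ∅} = F is exactly (2^ℓ − 1)^{|F|}. -/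
/-- The `i`-th node (for `0 ≤ i ≤ ℓ`) of the subdivision path replacing the arc
`a = (u,v)` in `H'(ℓ)`: node `0` is `u`, node `ℓ` is `v`, and the nodes in
between are the fresh vertices `a_1, …, a_{ℓ-1}`. -/
def HNode {V : Type*} (ℓ : ℕ) (a : V × V) (i : ℕ) : V ⊕ ((V × V) × ℕ) :=
  if i = 0 then Sum.inl a.1 else if i = ℓ then Sum.inl a.2 else Sum.inr (a, i)

/-- The directed path `P_a` of `ℓ` arcs replacing the arc `a = (u,v)` in
`H'(ℓ)`: `(u,a_1), (a_1,a_2), …, (a_{ℓ-2},a_{ℓ-1}), (a_{ℓ-1},v)`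
(for `ℓ = 1`, `P_a = {(u,v)}`). -/
def PathArcs {V : Type*} (ℓ : ℕ) (a : V × V) :
    Set ((V ⊕ ((V × V) × ℕ)) × (V ⊕ ((V × V) × ℕ))) :=
  { p | ∃ i < ℓ, p = (HNode ℓ a i, HNode ℓ a (i + 1)) }

/-- The arc set of the subdivision digraph `H'(ℓ)`: the union of the paths
`P_a` over all arcs `a` of `G`. -/
def HArcs {V : Type*} (A : Set (V × V)) (ℓ : ℕ) :
    Set ((V ⊕ ((V × V) × ℕ)) × (V ⊕ ((V × V) × ℕ))) :=
  ⋃ a ∈ A, PathArcs ℓ a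

/-! ### Auxiliary definitions and lemmas -/

section Aux

variable {V : Type*}

/-- The `i`-th arc of the subdivision path `P_a`. -/
def arcOf (ℓ : ℕ) (a : V × V) (i : ℕ) :
    (V ⊕ ((V × V) × ℕ)) × (V ⊕ ((V × V) × ℕ)) :=
  (HNode ℓ a i, HNode ℓ a (i + 1))

lemma hnode_zero (ℓ : ℕ) (a : V × V) : HNode ℓ a 0 = Sum.inl a.1 := by
  simp [HNode]

lemma hnode_last {ℓ : ℕ} (hl : ℓ ≠ 0) (a : V × V) : HNode ℓ a ℓ = Sum.inl a.2 := by
  simp [HNode, hl]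

lemma hnode_mid {ℓ i : ℕ} (h0 : 0 < i) (h1 : i < ℓ) (a : V × V) :
    HNode ℓ a i = Sum.inr (a, i) := by
  simp [HNode, h0.ne', h1.ne]

lemma mem_pathArcs {ℓ : ℕ} {a : V × V} {p} :
    p ∈ PathArcs ℓ a ↔ ∃ i < ℓ, p = arcOf ℓ a i := Iff.rfl

lemma mem_hArcs {A : Set (V × V)} {ℓ : ℕ} {p} :
    p ∈ HArcs A ℓ ↔ ∃ a ∈ A, ∃ i < ℓ, p = arcOf ℓ a i := by
  simp [HArcs, mem_pathArcs]

lemma arcOf_inj {ℓ : ℕ} {a b : V × V} {i j : ℕ} (hi : i < ℓ) (hj : j < ℓ)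
    (h : arcOf ℓ a i = arcOf ℓ b j) : a = b ∧ i = j := by
  have h1 : HNode ℓ a i = HNode ℓ b j := congrArg Prod.fst h
  have h2 : HNode ℓ a (i + 1) = HNode ℓ b (j + 1) := congrArg Prod.snd h
  rcases Nat.eq_zero_or_pos i with hi0 | hi0 <;> rcases Nat.eq_zero_or_pos j with hj0 | hj0
  · subst hi0; subst hj0
    refine ⟨?_, rfl⟩
    have h2' : HNode ℓ a 1 = HNode ℓ b 1 := h2
    rcases Nat.lt_or_ge 1 ℓ with hl | hl
    · rw [hnode_mid Nat.one_pos hl, hnode_mid Nat.one_pos hl] at h2'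
      exact (Prod.ext_iff.1 (Sum.inr.inj h2')).1
    · have hl1 : ℓ = 1 := le_antisymm hl hi
      subst hl1
      rw [hnode_zero, hnode_zero] at h1
      rw [hnode_last one_ne_zero, hnode_last one_ne_zero] at h2'
      exact Prod.ext (Sum.inl.inj h1) (Sum.inl.inj h2')
  · subst hi0; rw [hnode_zero, hnode_mid hj0 hj] at h1; exact absurd h1 (by simp)
  · subst hj0; rw [hnode_zero, hnode_mid hi0 hi] at h1; exact absurd h1 (by simp)
  · rw [hnode_mid hi0 hi, hnode_mid hj0 hj] at h1
    exact Prod.ext_iff.1 (Sum.inr.inj h1)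

/-- Structure of arcs leaving an original vertex. -/
lemma out_inl {A : Set (V × V)} {ℓ : ℕ} {u : V} {y}
    (h : (Sum.inl u, y) ∈ HArcs A ℓ) :
    ∃ b ∈ A, b.1 = u ∧ y = HNode ℓ b 1 ∧ (Sum.inl u, y) = arcOf ℓ b 0 := by
  obtain ⟨b, hb, i, hi, hp⟩ := mem_hArcs.1 h
  have h1 : Sum.inl u = HNode ℓ b i := congrArg Prod.fst hp
  have hi0 : i = 0 := by
    by_contra h0
    rw [hnode_mid (Nat.pos_of_ne_zero h0) hi] at h1
    exact absurd h1 (by simp)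
  subst hi0
  have h2 : y = HNode ℓ b 1 := congrArg Prod.snd hp
  refine ⟨b, hb, ?_, h2, hp⟩
  rw [hnode_zero] at h1
  exact (Sum.inl.inj h1).symm

/-- Structure of arcs leaving a subdivision vertex. -/
lemma out_inr {A : Set (V × V)} {ℓ : ℕ} {b : V × V} {i : ℕ} {y}
    (h : (Sum.inr (b, i), y) ∈ HArcs A ℓ) :
    b ∈ A ∧ 0 < i ∧ i < ℓ ∧ y = HNode ℓ b (i + 1) ∧
      (Sum.inr (b, i), y) = arcOf ℓ b i := by
  obtain ⟨a, ha, j, hj, hp⟩ := mem_hArcs.1 h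
  have h1 : Sum.inr (b, i) = HNode ℓ a j := congrArg Prod.fst hp
  have hj0 : j ≠ 0 := by
    intro h0; subst h0; rw [hnode_zero] at h1; exact absurd h1 (by simp)
  rw [hnode_mid (Nat.pos_of_ne_zero hj0) hj] at h1
  obtain ⟨hab, hij⟩ := Prod.mk.injEq .. ▸ Sum.inr.inj h1
  subst hab; subst hij
  exact ⟨ha, Nat.pos_of_ne_zero hj0, hj, congrArg Prod.snd hp, hp⟩

/-- Reachability statement when starting at an original vertex `Sum.inl u`. -/
def CLpred (A F : Set (V × V))
    (F' : Set ((V ⊕ ((V × V) × ℕ)) × (V ⊕ ((V × V) × ℕ)))) (ℓ : ℕ) (u : V)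
    (y : V ⊕ ((V × V) × ℕ)) : Prop :=
  (∃ b ∈ A, ∃ i', 0 < i' ∧ i' < ℓ ∧ b.1 = u ∧ y = Sum.inr (b, i') ∧
      ∀ j < i', arcOf ℓ b j ∉ F')
  ∨ (∃ w, Relation.TransGen (fun p q => (p, q) ∈ A \ F) u w ∧
      (y = Sum.inl w ∨ ∃ b ∈ A, ∃ i', 0 < i' ∧ i' < ℓ ∧ b.1 = w ∧
        y = Sum.inr (b, i') ∧ ∀ j < i', arcOf ℓ b j ∉ F'))

/-- Reachability statement when starting at a subdivision vertex `Sum.inr (b,i)`. -/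
def CRpred (A F : Set (V × V))
    (F' : Set ((V ⊕ ((V × V) × ℕ)) × (V ⊕ ((V × V) × ℕ)))) (ℓ : ℕ) (b : V × V) (i : ℕ)
    (y : V ⊕ ((V × V) × ℕ)) : Prop :=
  (∃ i', i < i' ∧ i' ≤ ℓ ∧ y = HNode ℓ b i' ∧
      ∀ j, i ≤ j → j < i' → arcOf ℓ b j ∉ F')
  ∨ ((∀ j, i ≤ j → j < ℓ → arcOf ℓ b j ∉ F') ∧ CLpred A F F' ℓ b.2 y)

/-- If every `F' ⊆ H'(ℓ)`-arcs hits exactly the paths of arcs in a feedback arc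
set `F` of `G`, then `F'` is a feedback arc set of `H'(ℓ)`. -/
lemma acyclic_of_hitset {A : Set (V × V)} (hloopless : ∀ v : V, (v, v) ∉ A)
    {ℓ : ℕ} (hℓ : 1 ≤ ℓ) {F : Set (V × V)} (_hFA : F ⊆ A) (hacy : Acyclic (A \ F))
    {F' : Set ((V ⊕ ((V × V) × ℕ)) × (V ⊕ ((V × V) × ℕ)))}
    (hsub : F' ⊆ HArcs A ℓ)
    (hhit : ∀ a : V × V, (a ∈ A ∧ (F' ∩ PathArcs ℓ a).Nonempty) ↔ a ∈ F) :
    Acyclic (HArcs A ℓ \ F') := by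
  have hl0 : ℓ ≠ 0 := by omega
  set D : (V ⊕ ((V × V) × ℕ)) → (V ⊕ ((V × V) × ℕ)) → Prop :=
    fun x y => (x, y) ∈ HArcs A ℓ \ F' with hD
  set T : V → V → Prop := Relation.TransGen (fun p q => (p, q) ∈ A \ F) with hT
  -- a path all of whose arcs avoid F' comes from an arc not in F
  have notF : ∀ b ∈ A, (∀ j < ℓ, arcOf ℓ b j ∉ F') → b ∉ F := by
    intro b hbA h hbF
    obtain ⟨p, hp1, hp2⟩ := ((hhit b).2 hbF).2
    obtain ⟨i, hi, rfl⟩ := mem_pathArcs.1 hp2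
    exact h i hi hp1
  have stepT : ∀ b ∈ A, b ∉ F → T b.1 b.2 := by
    intro b hbA hbF
    exact Relation.TransGen.single (by simpa using Set.mem_diff_of_mem hbA hbF)
  -- the main structural lemma, by head induction on the transitive chain
  have main : ∀ x y, Relation.TransGen D x y →
      (∀ u, x = Sum.inl u → CLpred A F F' ℓ u y) ∧
      (∀ b i, x = Sum.inr (b, i) → CRpred A F F' ℓ b i y) := by
    intro x y h
    induction h using Relation.TransGen.head_induction_on with
    | single h =>
      obtain ⟨hH, hF'⟩ := h
      constructor
      · rintro u rfl
        obtain ⟨b, hb, hb1, hy, harc⟩ := out_inl hH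
        rcases Nat.lt_or_ge 1 ℓ with hl | hl
        · left
          refine ⟨b, hb, 1, Nat.one_pos, hl, hb1, by rw [hy, hnode_mid Nat.one_pos hl], ?_⟩
          intro j hj
          interval_cases j
          rw [← harc]; exact hF'
        · have hl1 : ℓ = 1 := le_antisymm hl hℓ
          subst hl1
          have hbF : b ∉ F := by
            refine notF b hb ?_
            intro j hj
            interval_cases j
            rw [← harc]; exact hF'
          right
          exact ⟨b.2, hb1 ▸ stepT b hb hbF,
            Or.inl (by rw [hy, hnode_last one_ne_zero])⟩
      · rintro b i rfl
        obtain ⟨hbA, hi0, hiℓ, hy, harc⟩ := out_inr hH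
        left
        refine ⟨i + 1, Nat.lt_succ_self i, hiℓ, hy, ?_⟩
        intro j hj1 hj2
        have : j = i := by omega
        subst this
        rw [← harc]; exact hF'
    | head h' hrest IH =>
      obtain ⟨hH, hF'⟩ := h'
      constructor
      · rintro u rfl
        obtain ⟨b, hb, hb1, hz, harc⟩ := out_inl hH
        have harc0 : arcOf ℓ b 0 ∉ F' := by rw [← harc]; exact hF'
        rcases Nat.lt_or_ge 1 ℓ with hl | hl
        · -- z = Sum.inr (b, 1)
          have hz' : _ = Sum.inr (b, 1) := hz.trans (hnode_mid Nat.one_pos hl b)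
          have hCR := IH.2 b 1 hz'
          rcases hCR with ⟨i', h1i, hi'ℓ, hy, hav⟩ | ⟨hav, hCL⟩
          · have hav' : ∀ j < i', arcOf ℓ b j ∉ F' := by
              intro j hj
              rcases Nat.eq_zero_or_pos j with rfl | hj0
              · exact harc0
              · exact hav j hj0 hj
            rcases Nat.lt_or_ge i' ℓ with hi'' | hi''
            · left
              exact ⟨b, hb, i', by omega, hi'', hb1,
                by rw [hy, hnode_mid (by omega) hi''], hav'⟩
            · have : i' = ℓ := by omega
              subst this
              have hbF : b ∉ F := notF b hb (fun j hj => hav' j hj)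
              right
              exact ⟨b.2, hb1 ▸ stepT b hb hbF, Or.inl (by rw [hy, hnode_last hl0])⟩
          · have hbF : b ∉ F := by
              refine notF b hb ?_
              intro j hj
              rcases Nat.eq_zero_or_pos j with rfl | hj0
              · exact harc0
              · exact hav j hj0 hj
            have hT1 : T u b.2 := hb1 ▸ stepT b hb hbF
            rcases hCL with ⟨c, hc, i', hi'0, hi'ℓ, hc1, hy, hav'⟩ | ⟨w, hTw, hrest'⟩
            · right
              exact ⟨b.2, hT1, Or.inr ⟨c, hc, i', hi'0, hi'ℓ, hc1, hy, hav'⟩⟩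
            · right
              exact ⟨w, hT1.trans hTw, hrest'⟩
        · -- ℓ = 1 : z = Sum.inl b.2
          have hl1 : ℓ = 1 := le_antisymm hl hℓ
          subst hl1
          have hbF : b ∉ F := by
            refine notF b hb ?_
            intro j hj
            interval_cases j
            exact harc0
          have hT1 : T u b.2 := hb1 ▸ stepT b hb hbF
          have hz' : _ = Sum.inl b.2 := hz.trans (hnode_last one_ne_zero b)
          have hCL := IH.1 b.2 hz'
          rcases hCL with ⟨c, hc, i', hi'0, hi'ℓ, hc1, hy, hav'⟩ | ⟨w, hTw, hrest'⟩
          · right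
            exact ⟨b.2, hT1, Or.inr ⟨c, hc, i', hi'0, hi'ℓ, hc1, hy, hav'⟩⟩
          · right
            exact ⟨w, hT1.trans hTw, hrest'⟩
      · rintro b i rfl
        obtain ⟨hbA, hi0, hiℓ, hz, harc⟩ := out_inr hH
        have harci : arcOf ℓ b i ∉ F' := by rw [← harc]; exact hF'
        rcases Nat.lt_or_ge (i + 1) ℓ with hl | hl
        · have hz' : _ = Sum.inr (b, i + 1) := hz.trans (hnode_mid (by omega) hl b)
          have hCR := IH.2 b (i + 1) hz'
          rcases hCR with ⟨i', h1i, hi'ℓ, hy, hav⟩ | ⟨hav, hCL⟩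
          · left
            refine ⟨i', by omega, hi'ℓ, hy, ?_⟩
            intro j hj1 hj2
            rcases Nat.lt_or_ge j (i + 1) with hji | hji
            · have : j = i := by omega
              subst this; exact harci
            · exact hav j hji hj2
          · right
            refine ⟨?_, hCL⟩
            intro j hj1 hj2
            rcases Nat.lt_or_ge j (i + 1) with hji | hji
            · have : j = i := by omega
              subst this; exact harci
            · exact hav j hji hj2
        · have hi1 : i + 1 = ℓ := by omega
          have hz' : _ = Sum.inl b.2 := hz.trans (hi1 ▸ hnode_last hl0 b)
          have hCL := IH.1 b.2 hz'
          right
          refine ⟨?_, hCL⟩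
          intro j hj1 hj2
          have : j = i := by omega
          subst this; exact harci
  -- conclude acyclicity
  intro v hcyc
  have hfirst : ∃ z, D v z := by
    obtain ⟨c, h, -⟩ := Relation.TransGen.head'_iff.1 hcyc
    exact ⟨c, h⟩
  rcases v with u | ⟨b, i⟩
  · have hCL := (main _ _ hcyc).1 u rfl
    rcases hCL with ⟨c, hc, i', hi'0, hi'ℓ, hc1, hy, hav'⟩ | ⟨w, hTw, hrest'⟩
    · exact absurd hy (by simp)
    · rcases hrest' with hy | ⟨c, hc, i', hi'0, hi'ℓ, hc1, hy, hav'⟩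
      · obtain rfl : u = w := Sum.inl.inj hy
        exact hacy u hTw
      · exact absurd hy (by simp)
  · obtain ⟨z, hz⟩ := hfirst
    obtain ⟨hbA, hi0, hiℓ, -, -⟩ := out_inr hz.1
    have hCR := (main _ _ hcyc).2 b i rfl
    rcases hCR with ⟨i', h1i, hi'ℓ, hy, hav⟩ | ⟨hav, hCL⟩
    · rcases Nat.lt_or_ge i' ℓ with hi'' | hi''
      · rw [hnode_mid (by omega) hi''] at hy
        obtain ⟨-, h2⟩ := Prod.mk.injEq .. ▸ Sum.inr.inj hy
        omega
      · have : i' = ℓ := by omega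
        subst this
        rw [hnode_last hl0] at hy
        exact absurd hy (by simp)
    · rcases hCL with ⟨c, hc, i', hi'0, hi'ℓ, hc1, hy, hav'⟩ | ⟨w, hTw, hrest'⟩
      · obtain ⟨h1, h2⟩ := Prod.mk.injEq .. ▸ Sum.inr.inj hy
        subst h1; subst h2
        have hb' : b = (b.1, b.1) := Prod.ext rfl hc1.symm
        exact hloopless b.1 (hb' ▸ hc)
      · rcases hrest' with hy | ⟨c, hc, i', hi'0, hi'ℓ, hc1, hy, hav'⟩
        · exact absurd hy (by simp)
        · obtain ⟨h1, h2⟩ := Prod.mk.injEq .. ▸ Sum.inr.inj hy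
          subst h1; subst h2
          have hbF : b ∉ F := by
            refine notF b hbA ?_
            intro j hj
            rcases Nat.lt_or_ge j i with hji | hji
            · exact hav' j hji
            · exact hav j hji hj
          have : T b.2 b.2 :=
            Relation.TransGen.tail (hc1 ▸ hTw)
              (by simpa using Set.mem_diff_of_mem hbA hbF)
          exact hacy b.2 this
end Aux

lemma card_nonzero_boolfun (ℓ : ℕ) :
    Fintype.card {g : Fin ℓ → Bool // ∃ i, g i = true} = 2 ^ ℓ - 1 := by
  classical
  have hsub1 : Fintype.card {g : Fin ℓ → Bool // ¬ ∃ i, g i = true} = 1 := by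
    rw [Fintype.card_eq_one_iff]
    refine ⟨⟨fun _ => false, by simp⟩, ?_⟩
    rintro ⟨g, hg⟩
    push_neg at hg
    apply Subtype.ext
    funext i
    simpa using hg i
  have htot : Fintype.card (Fin ℓ → Bool) = 2 ^ ℓ := by simp
  have hcompl : Fintype.card {g : Fin ℓ → Bool // ¬ ∃ i, g i = true} =
      Fintype.card (Fin ℓ → Bool) -
        Fintype.card {g : Fin ℓ → Bool // ∃ i, g i = true} :=
    Fintype.card_subtype_compl _
  have hle : Fintype.card {g : Fin ℓ → Bool // ∃ i, g i = true} ≤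
      Fintype.card (Fin ℓ → Bool) := Fintype.card_subtype_le _
  rw [htot] at hcompl hle
  rw [hsub1] at hcompl
  generalize hx : Fintype.card {g : Fin ℓ → Bool // ∃ i, g i = true} = x at hcompl hle ⊢
  generalize hy : 2 ^ ℓ = y at hcompl hle ⊢
  clear hsub1 htot hx hy
  omega

theorem count_fas_over_fas {V : Type*} [Fintype V] (A : Set (V × V))
    (hloopless : ∀ v : V, (v, v) ∉ A) (ℓ : ℕ) (hℓ : 1 ≤ ℓ)
    (F : Set (V × V)) (hF : IsFAS A F) :
    {F' : Set ((V ⊕ ((V × V) × ℕ)) × (V ⊕ ((V × V) × ℕ))) |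
        IsFAS (HArcs A ℓ) F' ∧
          {a : V × V | a ∈ A ∧ (F' ∩ PathArcs ℓ a).Nonempty} = F}.ncard =
      (2 ^ ℓ - 1) ^ F.ncard := by
  classical
  obtain ⟨hFA, hacy⟩ := hF
  have hset : {F' : Set ((V ⊕ ((V × V) × ℕ)) × (V ⊕ ((V × V) × ℕ))) |
        IsFAS (HArcs A ℓ) F' ∧
          {a : V × V | a ∈ A ∧ (F' ∩ PathArcs ℓ a).Nonempty} = F} =
      {F' | F' ⊆ HArcs A ℓ ∧
        ∀ a : V × V, (a ∈ A ∧ (F' ∩ PathArcs ℓ a).Nonempty) ↔ a ∈ F} := by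
    ext F'
    simp only [Set.mem_setOf_eq]
    constructor
    · rintro ⟨⟨h1, h2⟩, h3⟩
      refine ⟨h1, fun a => ?_⟩
      rw [← h3]; simp
    · rintro ⟨h1, h2⟩
      refine ⟨⟨h1, acyclic_of_hitset hloopless hℓ hFA hacy h1 h2⟩, ?_⟩
      ext a
      simpa using h2 a
  rw [hset]
  set S : Set (Set ((V ⊕ ((V × V) × ℕ)) × (V ⊕ ((V × V) × ℕ)))) :=
    {F' | F' ⊆ HArcs A ℓ ∧
      ∀ a : V × V, (a ∈ A ∧ (F' ∩ PathArcs ℓ a).Nonempty) ↔ a ∈ F} with hSdef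
  haveI : Fintype ↥F := Fintype.ofFinite _
  -- the equivalence with nonvanishing boolean functions on F
  set glue : ({f : F → (Fin ℓ → Bool) // ∀ a, ∃ i, f a i = true}) →
      Set ((V ⊕ ((V × V) × ℕ)) × (V ⊕ ((V × V) × ℕ))) :=
    fun f => {p | ∃ a : F, ∃ i : Fin ℓ, f.1 a i = true ∧ p = arcOf ℓ (a : V × V) i.1}
    with hglue
  have hglue_mem : ∀ f, glue f ∈ S := by
    rintro ⟨f, hf⟩
    constructor
    · rintro p ⟨a, i, -, rfl⟩
      exact mem_hArcs.2 ⟨a, hFA a.2, i.1, i.2, rfl⟩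
    · intro a
      constructor
      · rintro ⟨haA, p, hp, hpa⟩
        obtain ⟨b, k, -, rfl⟩ := hp
        obtain ⟨i, hi, harc⟩ := mem_pathArcs.1 hpa
        obtain ⟨rfl, -⟩ := arcOf_inj k.2 hi harc
        exact b.2
      · intro haF
        obtain ⟨i, hi⟩ := hf ⟨a, haF⟩
        exact ⟨hFA haF, arcOf ℓ a i.1, ⟨⟨a, haF⟩, i, hi, rfl⟩,
          mem_pathArcs.2 ⟨i.1, i.2, rfl⟩⟩
  have e : ↥S ≃ {f : F → (Fin ℓ → Bool) // ∀ a, ∃ i, f a i = true} :=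
    { toFun := fun F' => ⟨fun a i => decide (arcOf ℓ (a : V × V) i.1 ∈ F'.1), by
        intro a
        obtain ⟨p, hp, hpa⟩ := ((F'.2.2 a).2 a.2).2
        obtain ⟨i, hi, rfl⟩ := mem_pathArcs.1 hpa
        exact ⟨⟨i, hi⟩, decide_eq_true hp⟩⟩
      invFun := fun f => ⟨glue f, hglue_mem f⟩
      left_inv := by
        rintro ⟨F', h1, h2⟩
        apply Subtype.ext
        ext p
        simp only [hglue, Set.mem_setOf_eq, decide_eq_true_eq]
        constructor
        · rintro ⟨a, i, hp, rfl⟩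
          exact hp
        · intro hp
          obtain ⟨b, hbA, j, hj, rfl⟩ := mem_hArcs.1 (h1 hp)
          have hbF : b ∈ F := (h2 b).1 ⟨hbA, arcOf ℓ b j, hp, mem_pathArcs.2 ⟨j, hj, rfl⟩⟩
          exact ⟨⟨b, hbF⟩, ⟨j, hj⟩, hp, rfl⟩
      right_inv := by
        rintro ⟨f, hf⟩
        apply Subtype.ext
        funext a i
        rw [Bool.eq_iff_iff]
        simp only [decide_eq_true_eq]
        constructor
        · rintro ⟨b, k, hbk, harc⟩
          obtain ⟨hab, hik⟩ := arcOf_inj i.2 k.2 harc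
          have : a = b := Subtype.ext hab
          subst this
          have : i = k := Fin.ext hik
          subst this
          exact hbk
        · intro h
          exact ⟨a, i, h, rfl⟩ }
  rw [← Nat.card_coe_set_eq, Nat.card_congr e, Nat.card_eq_fintype_card,
    Fintype.card_congr (Equiv.subtypePiEquivPi
      (p := fun (_ : F) (g : Fin ℓ → Bool) => ∃ i, g i = true)),
    Fintype.card_fun]
  rw [card_nonzero_boolfun, ← Nat.card_coe_set_eq, Nat.card_eq_fintype_card]
end
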